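/- With G = 3I - (13/12)L + J and H = -I - (1/12)L + (1/2)J (L the 3×3 all-ones matrix, J the 3×3 anti-diagonal matrix), the matrix G is invertible and G - H G⁻¹ H is positive semidefinite; in fact, conjugating by the orthogonal matrix T = (1/√6)[[√3,1,√2],[0,-2,√2],[-√3,1,√2]] diagonalizes G - H G⁻¹ H with eigenvalues 7/8, 63/16, 0. -/

import Mathlib

open Matrix

/-- The `3×3` all-ones matrix `L`. -/
def L3 : Matrix (Fin 3) (Fin 3) ℝ := of fun _ _ => 1

/-- The `3×3` anti-diagonal permutation matrix `J`. -/
def J3 : Matrix (Fin 3) (Fin 3) ℝ := of fun i j => if (i : ℕ) + (j : ℕ) = 2 then 1 else 0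

/-- `G = 3I - (13/12)L + J`. -/
noncomputable def G3 : Matrix (Fin 3) (Fin 3) ℝ :=
  (3 : ℝ) • (1 : Matrix (Fin 3) (Fin 3) ℝ) - (13/12 : ℝ) • L3 + J3

/-- `H = -I - (1/12)L + (1/2)J`. -/
noncomputable def H3 : Matrix (Fin 3) (Fin 3) ℝ :=
  -(1 : Matrix (Fin 3) (Fin 3) ℝ) - (1/12 : ℝ) • L3 + (1/2 : ℝ) • J3

/-- The orthogonal matrix `T = (1/√6)·[[√3, 1, √2], [0, -2, √2], [-√3, 1, √2]]`. -/
noncomputable def T3 : Matrix (Fin 3) (Fin 3) ℝ :=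
  (Real.sqrt 6)⁻¹ • !![Real.sqrt 3, 1, Real.sqrt 2;
                        0, -2, Real.sqrt 2;
                        -Real.sqrt 3, 1, Real.sqrt 2]

lemma hG3 : G3 = !![23/12, -13/12, -1/12; -13/12, 35/12, -13/12; -1/12, -13/12, 23/12] := by
  ext i j
  fin_cases i <;> fin_cases j <;> norm_num [G3, L3, J3, Matrix.one_apply, Fin.ext_iff]

lemma hH3 : H3 = !![-13/12, -1/12, 5/12; -1/12, -7/12, -1/12; 5/12, -1/12, -13/12] := by
  ext i j
  fin_cases i <;> fin_cases j <;> simp [H3, L3, J3, Matrix.one_apply] <;> norm_num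

lemma hGinv : G3⁻¹ = !![53/72, 13/36, 17/72; 13/36, 11/18, 13/36; 17/72, 13/36, 53/72] := by
  apply Matrix.inv_eq_right_inv
  rw [hG3, Matrix.one_fin_three, Matrix.mul_fin_three]
  norm_num

lemma hM3 : G3 - H3 * G3⁻¹ * H3 =
    !![35/32, -21/16, 7/32; -21/16, 21/8, -21/16; 7/32, -21/16, 35/32] := by
  rw [hGinv, hH3, hG3, Matrix.mul_fin_three, Matrix.mul_fin_three]
  ext i j
  fin_cases i <;> fin_cases j <;> norm_num

lemma hT3t : T3ᵀ = (Real.sqrt 6)⁻¹ • !![Real.sqrt 3, 0, -Real.sqrt 3;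
                        1, -2, 1;
                        Real.sqrt 2, Real.sqrt 2, Real.sqrt 2] := by
  ext i j
  fin_cases i <;> fin_cases j <;> simp [T3, Matrix.vecHead, Matrix.vecTail]

lemma hTT : T3ᵀ * T3 = 1 := by
  have h2 : Real.sqrt 2 * Real.sqrt 2 = 2 := Real.mul_self_sqrt (by norm_num)
  have h3 : Real.sqrt 3 * Real.sqrt 3 = 3 := Real.mul_self_sqrt (by norm_num)
  have h6 : Real.sqrt 6 = Real.sqrt 2 * Real.sqrt 3 := by
    rw [← Real.sqrt_mul (by norm_num)]; norm_num
  have h2p : Real.sqrt 2 ≠ 0 := by positivity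
  have h3p : Real.sqrt 3 ≠ 0 := by positivity
  rw [hT3t]
  ext i j
  fin_cases i <;> fin_cases j <;>
    simp [T3, Matrix.mul_apply, Fin.sum_univ_three, Matrix.one_apply, Fin.ext_iff, h6] <;>
    (field_simp; nlinarith [h2, h3, Real.sqrt_nonneg 2, Real.sqrt_nonneg 3])

lemma hMT : (G3 - H3 * G3⁻¹ * H3) * T3 = T3 * Matrix.diagonal ![7/8, 63/16, 0] := by
  rw [hM3]
  ext i j
  fin_cases i <;> fin_cases j <;>
    simp [T3, Matrix.mul_apply, Fin.sum_univ_three, Matrix.diagonal] <;> ring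

theorem stmt12 :
    IsUnit G3 ∧
    (G3 - H3 * G3⁻¹ * H3).PosSemidef ∧
    T3ᵀ * (G3 - H3 * G3⁻¹ * H3) * T3 = Matrix.diagonal ![7/8, 63/16, 0] := by
  have hdet : G3.det = 6 := by
    rw [hG3, Matrix.det_fin_three]; simp; norm_num
  have hunit : IsUnit G3 := by
    rw [Matrix.isUnit_iff_isUnit_det, hdet]
    exact isUnit_iff_ne_zero.mpr (by norm_num)
  have hdiag : T3ᵀ * (G3 - H3 * G3⁻¹ * H3) * T3 = Matrix.diagonal ![7/8, 63/16, 0] := by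
    rw [Matrix.mul_assoc, hMT, ← Matrix.mul_assoc, hTT, Matrix.one_mul]
  refine ⟨hunit, ?_, hdiag⟩
  have hTdet : IsUnit T3.det :=
    IsUnit.of_mul_eq_one _
      (by rw [← Matrix.det_transpose, ← Matrix.det_mul, hTT, Matrix.det_one])
  have hTinv : T3⁻¹ = T3ᵀ := Matrix.inv_eq_left_inv hTT
  have hTTt : T3 * T3ᵀ = 1 := by
    rw [← hTinv, Matrix.mul_nonsing_inv _ hTdet]
  have hMeq : G3 - H3 * G3⁻¹ * H3 = T3 * Matrix.diagonal ![7/8, 63/16, 0] * T3ᵀ := by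
    have h1 : (G3 - H3 * G3⁻¹ * H3) * T3 * T3ᵀ
        = T3 * Matrix.diagonal ![7/8, 63/16, 0] * T3ᵀ := by rw [hMT]
    rw [Matrix.mul_assoc _ T3 T3ᵀ, hTTt, Matrix.mul_one] at h1
    exact h1
  rw [hMeq]
  have hD : (Matrix.diagonal ![(7:ℝ)/8, 63/16, 0]).PosSemidef := by
    rw [Matrix.posSemidef_diagonal_iff]
    intro i; fin_cases i <;> norm_num
  simpa using hD.mul_mul_conjTranspose_same T3
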